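/- Let α∈(0,1) and θ>0. There exists a constant E>0 (depending only on α and θ) such that for all integers n≥1 and all integers k with 1≤k≤n and k≤n^α, one has ((θ/α)^{(k)}/(θ)^{(n)}) · 𝒞(n,k;α) ≤ E·k^{θ/α}/n^{α+θ}, where 𝒞(n,k;α) = (1/k!)·∑_{i=0}^{k} C(k,i)(−1)^i(−iα)^{(n)} is the generalized factorial coefficient (equal, up to the stated prefactor, to the probability that the Ewens–Pitman random partition of {1,…,n} with parameters (α,θ) has exactly k blocks). -/

import Mathlib

noncomputable section

/-- Rising factorial `(a)^(m) = a (a+1) ⋯ (a+m-1)` of a real number. -/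
def risingFactorial (a : ℝ) : ℕ → ℝ
  | 0 => 1
  | m + 1 => risingFactorial a m * (a + m)

/-- Generalized factorial coefficient
`𝒞(n,k;α) = (1/k!) ∑_{i=0}^k C(k,i) (-1)^i (-iα)^(n)`. -/
def genFactCoef (α : ℝ) (n k : ℕ) : ℝ :=
  (1 / (Nat.factorial k : ℝ)) *
    ∑ i ∈ Finset.range (k + 1),
      (k.choose i : ℝ) * (-1 : ℝ) ^ i * risingFactorial (-(i : ℝ) * α) n

namespace BCP
open Real

/-! ### Basic facts about the rising factorial -/

lemma rf_succ (a : ℝ) (n : ℕ) :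
    risingFactorial a (n+1) = risingFactorial a n * (a + n) := rfl

lemma rf_pos {a : ℝ} (ha : 0 < a) (n : ℕ) : 0 < risingFactorial a n := by
  induction n with
  | zero => norm_num [risingFactorial]
  | succ m ih => rw [rf_succ]; positivity

lemma rf_zero (n : ℕ) : risingFactorial 0 (n+1) = 0 := by
  induction n with
  | zero => norm_num [risingFactorial]
  | succ m ih => rw [rf_succ, ih, zero_mul]

/-! ### Basic facts about the generalized factorial coefficients -/

lemma nat_choose_id (k i : ℕ) : (k + 1 - i) * (k+1).choose i = (k+1) * k.choose i := by
  calc (k + 1 - i) * (k+1).choose i = (k+1).choose i * (k+1-i) := Nat.mul_comm _ _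
    _ = (k+1).choose (i+1) * (i+1) := (Nat.choose_succ_right_eq _ _).symm
    _ = (k+1) * k.choose i := (Nat.add_one_mul_choose_eq k i).symm

lemma real_choose_id (k i : ℕ) (hi : i ≤ k + 1) :
    ((k:ℝ) + 1 - i) * ((k+1).choose i : ℝ) = ((k:ℝ)+1) * (k.choose i : ℝ) := by
  rcases Nat.lt_or_ge i (k+1) with h | h
  · have := nat_choose_id k i
    have hcast : (((k + 1 - i) * (k+1).choose i : ℕ) : ℝ) = (((k+1) * k.choose i : ℕ) : ℝ) := by
      exact_mod_cast congrArg (Nat.cast (R := ℝ)) this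
    push_cast [Nat.cast_sub (by omega : i ≤ k+1)] at hcast
    linarith [hcast]
  · have hik : i = k + 1 := le_antisymm hi h
    subst hik
    rw [Nat.choose_succ_self]
    push_cast
    ring

lemma gfc_zero_right (α : ℝ) (n : ℕ) : genFactCoef α (n+1) 0 = 0 := by
  unfold genFactCoef
  simp [rf_zero n]

lemma gfc_zero_of_zero (α : ℝ) (k : ℕ) (hk : 1 ≤ k) : genFactCoef α 0 k = 0 := by
  unfold genFactCoef
  have h : ∀ i ∈ Finset.range (k+1),
      (k.choose i : ℝ) * (-1:ℝ)^i * risingFactorial (-(i:ℝ)*α) 0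
        = (-1:ℝ)^i * (k.choose i : ℝ) := by
    intro i _
    show (k.choose i : ℝ) * (-1:ℝ)^i * 1 = _
    ring
  rw [Finset.sum_congr rfl h]
  have := Int.alternating_sum_range_choose (n := k)
  have h2 : ∑ i ∈ Finset.range (k+1), (-1:ℝ)^i * (k.choose i : ℝ) = 0 := by
    have h3 : ((∑ i ∈ Finset.range (k+1), (-1:ℤ)^i * (k.choose i : ℤ) : ℤ) : ℝ)
        = ((if k = 0 then 1 else 0 : ℤ) : ℝ) := congrArg _ this
    push_cast at h3
    rw [if_neg (by omega : ¬ k = 0)] at h3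
    exact_mod_cast h3
  rw [h2, mul_zero]

/-- The fundamental recursion `𝒞(n+1,k+1;α) = (n-(k+1)α) 𝒞(n,k+1;α) + α 𝒞(n,k;α)`. -/
lemma gfc_rec (α : ℝ) (n k : ℕ) :
    genFactCoef α (n+1) (k+1)
      = ((n:ℝ) - ((k:ℝ)+1)*α) * genFactCoef α n (k+1) + α * genFactCoef α n k := by
  unfold genFactCoef
  have hzero : ((k.choose (k+1) : ℝ)) * (-1)^(k+1) * risingFactorial (-((k+1:ℕ):ℝ)*α) n = 0 := by
    rw [Nat.choose_succ_self]; push_cast; ring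
  have hext : ∑ i ∈ Finset.range (k+1), (k.choose i : ℝ) * (-1)^i * risingFactorial (-(i:ℝ)*α) n
      = ∑ i ∈ Finset.range (k+2), (k.choose i : ℝ) * (-1)^i * risingFactorial (-(i:ℝ)*α) n := by
    rw [Finset.sum_range_succ (n := k+1)]
    push_cast at hzero ⊢
    rw [hzero, add_zero]
  have hsum : ∑ i ∈ Finset.range (k+2),
      (((k+1).choose i : ℝ)) * (-1)^i * risingFactorial (-(i:ℝ)*α) (n+1)
    = ∑ i ∈ Finset.range (k+2),
      ( ((n:ℝ) - ((k:ℝ)+1)*α) * ((((k+1).choose i : ℝ)) * (-1)^i * risingFactorial (-(i:ℝ)*α) n)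
        + α * (((k:ℝ)+1) * ((k.choose i : ℝ) * (-1)^i * risingFactorial (-(i:ℝ)*α) n)) ) := by
    refine Finset.sum_congr rfl ?_
    intro i hi
    have hi' : i ≤ k + 1 := by
      have := Finset.mem_range.mp hi; omega
    have hid := real_choose_id k i hi'
    rw [rf_succ]
    linear_combination (α * (-1:ℝ)^i * risingFactorial (-(i:ℝ)*α) n) * hid
  rw [hsum, Finset.sum_add_distrib, ← Finset.mul_sum, ← Finset.mul_sum, ← Finset.mul_sum, ← hext]
  have hfac : ((k+1).factorial : ℝ) = ((k:ℝ)+1) * (k.factorial : ℝ) := by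
    push_cast [Nat.factorial_succ]; ring
  have h1 : (k.factorial : ℝ) ≠ 0 := by positivity
  have h2 : ((k:ℝ)+1) ≠ 0 := by positivity
  rw [hfac]
  field_simp

lemma gfc_eq_zero_of_lt (α : ℝ) : ∀ n k : ℕ, n < k → genFactCoef α n k = 0 := by
  intro n
  induction n with
  | zero => intro k hk; exact gfc_zero_of_zero α k hk
  | succ m ih =>
    intro k hk
    obtain ⟨k', rfl⟩ : ∃ k', k = k' + 1 := ⟨k - 1, by omega⟩
    rw [gfc_rec α m k', ih (k'+1) (by omega), ih k' (by omega)]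
    ring

/-! ### The block-count probabilities and their recursion -/

def p (α θ : ℝ) (n k : ℕ) : ℝ :=
  risingFactorial (θ/α) k / risingFactorial θ n * genFactCoef α n k

variable {α θ : ℝ}

lemma p_zero_right (n : ℕ) : p α θ (n+1) 0 = 0 := by
  rw [p, gfc_zero_right, mul_zero]

lemma p_eq_zero_of_lt {n k : ℕ} (h : n < k) : p α θ n k = 0 := by
  rw [p, gfc_eq_zero_of_lt α n k h, mul_zero]

lemma p_one_one (hα0 : 0 < α) (hθ : 0 < θ) : p α θ 1 1 = 1 := by
  have h1 : genFactCoef α 1 1 = α := by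
    unfold genFactCoef
    rw [Finset.sum_range_succ, Finset.sum_range_one]
    norm_num [risingFactorial]
  rw [p, h1]
  simp only [risingFactorial]
  push_cast
  field_simp
  ring

lemma p_rec (hα0 : 0 < α) (hθ : 0 < θ) (n k : ℕ) (hn : 1 ≤ n) :
    p α θ (n+1) (k+1)
      = (p α θ n (k+1) * ((n:ℝ) - ((k:ℝ)+1)*α) + p α θ n k * (θ + k*α)) / ((n:ℝ) + θ) := by
  have hrfν : risingFactorial θ (n+1) = risingFactorial θ n * (θ + n) := rf_succ θ n
  have hrfk : risingFactorial (θ/α) (k+1) = risingFactorial (θ/α) k * (θ/α + k) := rf_succ _ k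
  have h1 : risingFactorial θ n > 0 := rf_pos hθ n
  have h2 : (θ:ℝ) + n > 0 := by positivity
  have hαne : α ≠ 0 := ne_of_gt hα0
  rw [p, p, p, hrfν, hrfk, gfc_rec]
  field_simp
  ring

lemma p_bounds (hα0 : 0 < α) (hα1 : α < 1) (hθ : 0 < θ) :
    ∀ n, 1 ≤ n → ∀ k, 0 ≤ p α θ n k ∧ p α θ n k ≤ 1 := by
  intro n hn
  induction n, hn using Nat.le_induction with
  | base =>
    intro k
    match k with
    | 0 => rw [p_zero_right]; norm_num
    | 1 => rw [p_one_one hα0 hθ]; norm_num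
    | (m+2) => rw [p_eq_zero_of_lt (by omega)]; norm_num
  | succ n hn ih =>
    intro k
    match k with
    | 0 => rw [p_zero_right]; norm_num
    | (k'+1) =>
      rcases Nat.lt_or_ge (n+1) (k'+1) with h | h
      · rw [p_eq_zero_of_lt h]; norm_num
      · have hrec := p_rec hα0 hθ n k' hn
        have hden : (0:ℝ) < (n:ℝ) + θ := by positivity
        have hkn : (k':ℝ) ≤ (n:ℝ) := by exact_mod_cast (by omega : k' ≤ n)
        obtain ⟨ih1, ih1'⟩ := ih (k'+1)
        obtain ⟨ih0, ih0'⟩ := ih k'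
        have hc2 : (0:ℝ) ≤ θ + k'*α := by positivity
        rcases Nat.lt_or_ge n (k'+1) with hd | hd
        · have hz : p α θ n (k'+1) = 0 := p_eq_zero_of_lt hd
          rw [hrec, hz, zero_mul, zero_add]
          constructor
          · positivity
          · rw [div_le_one hden]
            nlinarith
        · have hc1 : (0:ℝ) ≤ (n:ℝ) - ((k':ℝ)+1)*α := by
            have : ((k':ℝ)+1) ≤ (n:ℝ) := by exact_mod_cast (by omega : k'+1 ≤ n)
            nlinarith
          rw [hrec]
          constructor
          · positivity
          · rw [div_le_one hden]
            nlinarith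

/-! ### The comparison sequences -/

def hseq (r : ℝ) (k : ℕ) : ℝ := ∏ j ∈ Finset.Icc 1 (k-1), (1 + r/(j:ℝ))
def gseq (α θ : ℝ) (n : ℕ) : ℝ := ∏ m ∈ Finset.Icc 1 (n-1), (((m:ℝ)-α)/((m:ℝ)+θ))

lemma hseq_one (r : ℝ) : hseq r 1 = 1 := by simp [hseq]
lemma hseq_succ (r : ℝ) (k : ℕ) (hk : 1 ≤ k) :
    hseq r (k+1) = hseq r k * (1 + r/(k:ℝ)) := by
  unfold hseq
  have h1 : k + 1 - 1 = (k-1) + 1 := by omega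
  rw [h1, Finset.prod_Icc_succ_top (by omega : 1 ≤ (k-1)+1)]
  have h2 : (k-1)+1 = k := by omega
  rw [h2]

lemma one_le_hseq {r : ℝ} (hr : 0 ≤ r) (k : ℕ) : 1 ≤ hseq r k := by
  unfold hseq
  calc (1:ℝ) = ∏ _j ∈ Finset.Icc 1 (k-1), (1:ℝ) := by rw [Finset.prod_const_one]
    _ ≤ ∏ j ∈ Finset.Icc 1 (k-1), (1 + r/(j:ℝ)) := by
        apply Finset.prod_le_prod
        · intro j hj; norm_num
        · intro j hj
          have : (0:ℝ) ≤ r/(j:ℝ) := by positivity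
          linarith

lemma gseq_one (α θ : ℝ) : gseq α θ 1 = 1 := by simp [gseq]
lemma gseq_zero (α θ : ℝ) : gseq α θ 0 = 1 := by simp [gseq]
lemma gseq_succ (α θ : ℝ) (n : ℕ) (hn : 1 ≤ n) :
    gseq α θ (n+1) = gseq α θ n * (((n:ℝ)-α)/((n:ℝ)+θ)) := by
  unfold gseq
  have h1 : n + 1 - 1 = (n-1) + 1 := by omega
  rw [h1, Finset.prod_Icc_succ_top (by omega : 1 ≤ (n-1)+1)]
  have h2 : (n-1)+1 = n := by omega
  rw [h2]

lemma gseq_pos (hα1 : α < 1) (hθ : 0 < θ) (n : ℕ) : 0 < gseq α θ n := by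
  apply Finset.prod_pos
  intro m hm
  have hm1 : 1 ≤ m := (Finset.mem_Icc.mp hm).1
  have : (1:ℝ) ≤ (m:ℝ) := by exact_mod_cast hm1
  apply div_pos <;> nlinarith

lemma gseq_succ_le (hα0 : 0 < α) (hα1 : α < 1) (hθ : 0 < θ) (n : ℕ) :
    gseq α θ (n+1) ≤ gseq α θ n := by
  rcases Nat.eq_zero_or_pos n with rfl | hn
  · rw [gseq_zero, gseq_one]
  · rw [gseq_succ α θ n hn]
    have hpos := gseq_pos hα1 hθ n
    have h1 : (1:ℝ) ≤ (n:ℝ) := by exact_mod_cast hn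
    have hfle : ((n:ℝ)-α)/((n:ℝ)+θ) ≤ 1 := by
      rw [div_le_one (by nlinarith)]
      nlinarith
    nlinarith

lemma gseq_anti (hα0 : 0 < α) (hα1 : α < 1) (hθ : 0 < θ) :
    ∀ m n : ℕ, m ≤ n → gseq α θ n ≤ gseq α θ m := by
  intro m n h
  induction n, h using Nat.le_induction with
  | base => exact le_refl _
  | succ n hmn ih => exact le_trans (gseq_succ_le hα0 hα1 hθ n) ih

lemma gseq_le_one (hα0 : 0 < α) (hα1 : α < 1) (hθ : 0 < θ) (n : ℕ) :
    gseq α θ n ≤ 1 := by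
  have := gseq_anti hα0 hα1 hθ 0 n (Nat.zero_le n)
  rwa [gseq_zero] at this

/-! ### Analytic estimates -/

lemma exp_quad {x : ℝ} (h1 : 0 ≤ x) (h2 : x ≤ 1) : exp x ≤ 1 + x + x^2 := by
  have := Real.exp_bound' h1 h2 (n := 2) (by norm_num)
  rw [Finset.sum_range_succ, Finset.sum_range_one] at this
  norm_num at this
  nlinarith [this, sq_nonneg x]

lemma log_lb {x : ℝ} (hx : 0 < x) : 1/(x+1) ≤ Real.log ((x+1)/x) := by
  have h1 : Real.log (x/(x+1)) ≤ x/(x+1) - 1 := log_le_sub_one_of_pos (by positivity)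
  have h2 : Real.log (x/(x+1)) = - Real.log ((x+1)/x) := by
    rw [← Real.log_inv]
    congr 1
    field_simp
  rw [h2] at h1
  have h3 : x/(x+1) - 1 = -(1/(x+1)) := by field_simp; ring
  rw [h3] at h1
  linarith

lemma hstep {r x : ℝ} (hr : 0 < r) (hx : 1 ≤ x) :
    x^r * exp (-(r/x)) * (1 + r/x) ≤ (x+1)^r * exp (-(r/(x+1))) := by
  have hx0 : 0 < x := by linarith
  have hlog : 1/(x+1) ≤ Real.log ((x+1)/x) := log_lb hx0
  have key : (1 + r/x) ≤ ((x+1)/x)^r * exp (r/x - r/(x+1)) := by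
    have e1 : (1 : ℝ) + r/x ≤ exp (r/x) := by
      have := Real.add_one_le_exp (r/x); linarith
    have e2 : exp (r/x) = ((x+1)/x)^r * exp (r/x - r * Real.log ((x+1)/x)) := by
      rw [Real.rpow_def_of_pos (by positivity), ← Real.exp_add]
      congr 1
      ring
    have e3 : exp (r/x - r * Real.log ((x+1)/x)) ≤ exp (r/x - r/(x+1)) := by
      apply Real.exp_le_exp.mpr
      have : r * (1/(x+1)) ≤ r * Real.log ((x+1)/x) := by
        apply mul_le_mul_of_nonneg_left hlog (le_of_lt hr)
      have hr1 : r/(x+1) ≤ r * Real.log ((x+1)/x) := by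
        rw [div_eq_mul_one_div]; exact this
      linarith
    calc (1:ℝ) + r/x ≤ exp (r/x) := e1
      _ = ((x+1)/x)^r * exp (r/x - r * Real.log ((x+1)/x)) := e2
      _ ≤ ((x+1)/x)^r * exp (r/x - r/(x+1)) := by
          apply mul_le_mul_of_nonneg_left e3 (le_of_lt (rpow_pos_of_pos (by positivity) r))
  have hxp : (0:ℝ) < x^r := rpow_pos_of_pos hx0 r
  have hdiv : ((x+1)/x)^r = (x+1)^r / x^r := Real.div_rpow (by positivity) (le_of_lt hx0) r
  calc x^r * exp (-(r/x)) * (1 + r/x)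
      ≤ x^r * exp (-(r/x)) * (((x+1)/x)^r * exp (r/x - r/(x+1))) := by
        apply mul_le_mul_of_nonneg_left key (by positivity)
    _ = (x+1)^r * exp (-(r/(x+1))) := by
        rw [hdiv]
        have hee : exp (-(r/x)) * exp (r/x - r/(x+1)) = exp (-(r/(x+1))) := by
          rw [← Real.exp_add]; congr 1; ring
        have hxne : x^r ≠ 0 := ne_of_gt hxp
        calc x ^ r * rexp (-(r / x)) * ((x + 1) ^ r / x^r * rexp (r / x - r / (x + 1)))
            = (x+1)^r * (rexp (-(r/x)) * rexp (r/x - r/(x+1))) * (x^r / x^r) := by ring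
          _ = (x+1)^r * rexp (-(r/(x+1))) := by rw [hee, div_self hxne, mul_one]

lemma hseq_le {r : ℝ} (hr : 0 < r) : ∀ k : ℕ, 1 ≤ k → hseq r k ≤ exp r * (k:ℝ)^r := by
  have main : ∀ k : ℕ, 1 ≤ k → hseq r k ≤ exp r * (k:ℝ)^r * exp (-(r/(k:ℝ))) := by
    intro k hk
    induction k, hk using Nat.le_induction with
    | base =>
      rw [hseq_one]
      norm_num [Real.one_rpow, ← Real.exp_add]
    | succ k hk ih =>
      have hk1 : (1:ℝ) ≤ (k:ℝ) := by exact_mod_cast hk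
      rw [hseq_succ r k hk]
      calc hseq r k * (1 + r/(k:ℝ))
          ≤ (exp r * (k:ℝ)^r * exp (-(r/(k:ℝ)))) * (1 + r/(k:ℝ)) := by
            apply mul_le_mul_of_nonneg_right ih
            have : 0 ≤ r/(k:ℝ) := by positivity
            linarith
        _ = exp r * ((k:ℝ)^r * exp (-(r/(k:ℝ))) * (1 + r/(k:ℝ))) := by ring
        _ ≤ exp r * (((k:ℝ)+1)^r * exp (-(r/((k:ℝ)+1)))) := by
            apply mul_le_mul_of_nonneg_left (hstep hr hk1) (le_of_lt (exp_pos r))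
        _ = exp r * (((k:ℕ)+1:ℕ):ℝ)^r * exp (-(r/(((k:ℕ)+1:ℕ):ℝ))) := by
            push_cast; ring
  intro k hk
  calc hseq r k ≤ exp r * (k:ℝ)^r * exp (-(r/(k:ℝ))) := main k hk
    _ ≤ exp r * (k:ℝ)^r * 1 := by
        apply mul_le_mul_of_nonneg_left _ (by positivity)
        apply Real.exp_le_one_iff.mpr
        have : (0:ℝ) < (k:ℝ) := by exact_mod_cast hk
        have : 0 ≤ r/(k:ℝ) := by positivity
        linarith
    _ = exp r * (k:ℝ)^r := by ring

lemma ratio_ineq (hα0 : 0 < α) (hα1 : α < 1) (hθ : 0 < θ) (x : ℝ) (hx : 1 ≤ x) :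
    (x - α) * exp ((α+θ)/x)
      ≤ (x + θ) * (1 + ((α+θ)^2*exp (α+θ) + (α+θ) + (α+θ)^2)/x^2) := by
  set β := α + θ with hβdef
  set c := β^2*exp β + β + β^2 with hcdef
  have hβ : 0 < β := by positivity
  have hx0 : 0 < x := by linarith
  have hx2 : (0:ℝ) < x^2 := by positivity
  have hexpb : (1:ℝ) ≤ exp β := by
    have := Real.add_one_le_exp β; linarith
  have hxa : 0 ≤ x - α := by linarith
  rcases le_or_gt β x with hcase | hcase
  · have h1 : β/x ≤ 1 := by rw [div_le_one hx0]; exact hcase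
    have h0 : 0 ≤ β/x := by positivity
    have e := exp_quad h0 h1
    have eA : exp (β/x) ≤ (x^2 + β*x + β^2)/x^2 := by
      have : (1:ℝ) + β/x + (β/x)^2 = (x^2+β*x+β^2)/x^2 := by field_simp
      rw [← this]; exact e
    have key : (x-α)*(x^2+β*x+β^2) ≤ (x+θ)*(x^2+c) := by
      rw [← sub_nonneg]
      have hθβ : θ = β - α := by rw [hβdef]; ring
      have hdd : (x+θ)*(x^2+c) - (x-α)*(x^2+β*x+β^2)
          = (c - β^2 + α*β)*x + θ*c + α*β^2 + (θ - (β-α))*x^2 := by ring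
      have h5 : 0 ≤ c - β^2 + α*β := by
        have h6 : c - β^2 + α*β = β^2*exp β + β + α*β := by rw [hcdef]; ring
        rw [h6]
        positivity
      rw [hdd, ← hθβ]
      have hc0 : (0:ℝ) ≤ c := by positivity
      nlinarith [mul_nonneg h5 (by linarith : (0:ℝ) ≤ x), mul_nonneg hθ.le hc0,
        mul_nonneg hα0.le (sq_nonneg β)]
    calc (x-α)*exp (β/x) ≤ (x-α)*((x^2+β*x+β^2)/x^2) :=
          mul_le_mul_of_nonneg_left eA hxa
      _ = (x-α)*(x^2+β*x+β^2)/x^2 := by ring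
      _ ≤ (x+θ)*(x^2+c)/x^2 := by
          gcongr
      _ = (x+θ)*(1+c/x^2) := by field_simp
  · have he : exp (β/x) ≤ exp β := by
      apply Real.exp_le_exp.mpr
      exact div_le_self hβ.le hx
    have hl1 : (x-α)*exp (β/x) ≤ x*exp β := by
      have h2 : (x-α) * exp (β/x) ≤ x * exp (β/x) := by
        apply mul_le_mul_of_nonneg_right (by linarith) (le_of_lt (exp_pos _))
      have h3 : x * exp (β/x) ≤ x * exp β := mul_le_mul_of_nonneg_left he hx0.le
      linarith
    have hl2 : x*exp β ≤ c/x := by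
      rw [le_div_iff₀ hx0]
      have : x*x ≤ β*β := by nlinarith
      nlinarith [exp_pos β]
    have hl3 : c/x ≤ (x+θ)*(1+c/x^2) := by
      have hcc : 0 ≤ c := by positivity
      have expand : (x+θ)*(1+c/x^2) = x + θ + c/x + θ*c/x^2 := by
        field_simp; ring
      rw [expand]
      have h4 : 0 ≤ θ*c/x^2 := by positivity
      linarith
    linarith

lemma gq_le (hα0 : 0 < α) (hα1 : α < 1) (hθ : 0 < θ) :
    ∀ n : ℕ, 1 ≤ n →
      gseq α θ n * (n:ℝ)^(α+θ)
        ≤ exp (2*((α+θ)^2*exp (α+θ) + (α+θ) + (α+θ)^2))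
            * exp (-(2*((α+θ)^2*exp (α+θ) + (α+θ) + (α+θ)^2))/n) := by
  set β := α + θ with hβdef
  set c := β^2*exp β + β + β^2 with hcdef
  have hβ : 0 < β := by positivity
  have hc0 : (0:ℝ) ≤ c := by positivity
  intro n hn
  induction n, hn using Nat.le_induction with
  | base =>
    rw [gseq_one]
    simp only [Nat.cast_one, Real.one_rpow, one_mul]
    rw [← Real.exp_add]
    norm_num
  | succ n hn ih =>
    have hx1 : (1:ℝ) ≤ (n:ℝ) := by exact_mod_cast hn
    have hx0 : (0:ℝ) < (n:ℝ) := by linarith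
    have hx2 : (0:ℝ) < (n:ℝ)^2 := by positivity
    have hgpos := gseq_pos hα1 hθ n
    have hθn : (0:ℝ) < (n:ℝ) + θ := by positivity
    have hsplit : (((n:ℕ)+1:ℕ):ℝ)^β = (n:ℝ)^β * (((n:ℝ)+1)/(n:ℝ))^β := by
      rw [← Real.mul_rpow (le_of_lt hx0) (by positivity)]
      congr 1
      push_cast
      field_simp
    have hrle : (((n:ℝ)+1)/(n:ℝ))^β ≤ exp (β/(n:ℝ)) := by
      rw [Real.rpow_def_of_pos (by positivity)]
      apply Real.exp_le_exp.mpr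
      have hlog : Real.log (((n:ℝ)+1)/(n:ℝ)) ≤ 1/(n:ℝ) := by
        have := Real.log_le_sub_one_of_pos (show (0:ℝ) < ((n:ℝ)+1)/(n:ℝ) by positivity)
        have heq : ((n:ℝ)+1)/(n:ℝ) - 1 = 1/(n:ℝ) := by field_simp; ring
        linarith [heq ▸ this]
      calc Real.log (((n:ℝ)+1)/(n:ℝ)) * β ≤ (1/(n:ℝ)) * β :=
            mul_le_mul_of_nonneg_right hlog hβ.le
        _ = β/(n:ℝ) := by ring
    have hexp0 : (0:ℝ) < exp (β/(n:ℝ)) := exp_pos _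
    have step1 : gseq α θ (n+1) * (((n:ℕ)+1:ℕ):ℝ)^β
        ≤ gseq α θ n * (n:ℝ)^β * (((n:ℝ)-α) * exp (β/(n:ℝ))) / ((n:ℝ)+θ) := by
      rw [gseq_succ α θ n hn, hsplit]
      have hnn : 0 ≤ gseq α θ n * (n:ℝ)^β * ((n:ℝ)-α) / ((n:ℝ)+θ) := by
        have : (0:ℝ) ≤ (n:ℝ) - α := by linarith
        positivity
      calc gseq α θ n * (((n:ℝ)-α)/((n:ℝ)+θ)) * ((n:ℝ)^β * (((n:ℝ)+1)/(n:ℝ))^β)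
          = (gseq α θ n * (n:ℝ)^β * ((n:ℝ)-α) / ((n:ℝ)+θ)) * (((n:ℝ)+1)/(n:ℝ))^β := by
            ring
        _ ≤ (gseq α θ n * (n:ℝ)^β * ((n:ℝ)-α) / ((n:ℝ)+θ)) * exp (β/(n:ℝ)) :=
            mul_le_mul_of_nonneg_left hrle hnn
        _ = gseq α θ n * (n:ℝ)^β * (((n:ℝ)-α) * exp (β/(n:ℝ))) / ((n:ℝ)+θ) := by
            ring
    have step2 : gseq α θ n * (n:ℝ)^β * (((n:ℝ)-α) * exp (β/(n:ℝ))) / ((n:ℝ)+θ)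
        ≤ gseq α θ n * (n:ℝ)^β * (1 + c/(n:ℝ)^2) := by
      rw [div_le_iff₀ hθn]
      have hq0 : (0:ℝ) ≤ gseq α θ n * (n:ℝ)^β := by positivity
      have hr := ratio_ineq hα0 hα1 hθ (n:ℝ) hx1
      calc gseq α θ n * (n:ℝ)^β * (((n:ℝ)-α) * exp (β/(n:ℝ)))
          ≤ gseq α θ n * (n:ℝ)^β * (((n:ℝ)+θ) * (1 + c/(n:ℝ)^2)) :=
            mul_le_mul_of_nonneg_left hr hq0
        _ = gseq α θ n * (n:ℝ)^β * (1 + c/(n:ℝ)^2) * ((n:ℝ)+θ) := by ring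
    have step3 : gseq α θ n * (n:ℝ)^β * (1 + c/(n:ℝ)^2)
        ≤ exp (2*c) * exp (-(2*c)/((n:ℝ)+1)) := by
      have h1c : 1 + c/(n:ℝ)^2 ≤ exp (c/(n:ℝ)^2) := by
        have := Real.add_one_le_exp (c/(n:ℝ)^2); linarith
      have h1c0 : (0:ℝ) ≤ 1 + c/(n:ℝ)^2 := by positivity
      have hdiff : -(2*c)/(n:ℝ) + c/(n:ℝ)^2 ≤ -(2*c)/((n:ℝ)+1) := by
        rw [← sub_nonneg]
        have heq : -(2*c)/((n:ℝ)+1) - (-(2*c)/(n:ℝ) + c/(n:ℝ)^2)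
            = c*((n:ℝ)-1)/((n:ℝ)^2*((n:ℝ)+1)) := by
          field_simp
          ring
        rw [heq]
        have : (0:ℝ) ≤ (n:ℝ) - 1 := by linarith
        positivity
      calc gseq α θ n * (n:ℝ)^β * (1 + c/(n:ℝ)^2)
          ≤ (exp (2*c) * exp (-(2*c)/(n:ℝ))) * (1 + c/(n:ℝ)^2) :=
            mul_le_mul_of_nonneg_right ih h1c0
        _ ≤ (exp (2*c) * exp (-(2*c)/(n:ℝ))) * exp (c/(n:ℝ)^2) := by
            apply mul_le_mul_of_nonneg_left h1c (by positivity)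
        _ = exp (2*c) * exp (-(2*c)/(n:ℝ) + c/(n:ℝ)^2) := by
            rw [mul_assoc, ← Real.exp_add]
        _ ≤ exp (2*c) * exp (-(2*c)/((n:ℝ)+1)) := by
            apply mul_le_mul_of_nonneg_left (Real.exp_le_exp.mpr hdiff) (by positivity)
    have final : gseq α θ (n+1) * (((n:ℕ)+1:ℕ):ℝ)^β ≤ exp (2*c) * exp (-(2*c)/((n:ℝ)+1)) :=
      le_trans step1 (le_trans step2 step3)
    have hcast : (((n:ℕ)+1:ℕ):ℝ) = (n:ℝ)+1 := by push_cast; ring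
    rw [hcast] at final
    exact_mod_cast final

lemma gseq_le_K (hα0 : 0 < α) (hα1 : α < 1) (hθ : 0 < θ) (n : ℕ) (hn : 1 ≤ n) :
    gseq α θ n ≤ exp (2*((α+θ)^2*exp (α+θ) + (α+θ) + (α+θ)^2)) / (n:ℝ)^(α+θ) := by
  set c := (α+θ)^2*exp (α+θ) + (α+θ) + (α+θ)^2 with hcdef
  have hc0 : (0:ℝ) ≤ c := by positivity
  have hx0 : (0:ℝ) < (n:ℝ) := by exact_mod_cast hn
  have hrp : (0:ℝ) < (n:ℝ)^(α+θ) := Real.rpow_pos_of_pos hx0 _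
  rw [le_div_iff₀ hrp]
  calc gseq α θ n * (n:ℝ)^(α+θ) ≤ exp (2*c) * exp (-(2*c)/n) := gq_le hα0 hα1 hθ n hn
    _ ≤ exp (2*c) * 1 := by
        apply mul_le_mul_of_nonneg_left _ (le_of_lt (exp_pos _))
        apply Real.exp_le_one_iff.mpr
        have h5 : (0:ℝ) ≤ (2*c)/n := by positivity
        have h6 : -(2*c)/(n:ℝ) = -((2*c)/n) := by ring
        rw [h6]
        linarith
    _ = exp (2*c) := mul_one _

/-! ### The main induction -/

lemma main_bound (hα0 : 0 < α) (hα1 : α < 1) (hθ : 0 < θ) :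
    ∀ n, 1 ≤ n → ∀ k, 1 ≤ k → k ≤ n →
      p α θ n k ≤ (1 / gseq α θ (⌈(θ+α)/(1-α)⌉₊ + 1)) * hseq (θ/α) k * gseq α θ n := by
  set N₀ : ℕ := ⌈(θ+α)/(1-α)⌉₊ + 1 with hN₀def
  set r : ℝ := θ/α with hrdef
  have hr0 : 0 < r := by positivity
  have hgN₀ : 0 < gseq α θ N₀ := gseq_pos hα1 hθ N₀
  have hgN₀1 : gseq α θ N₀ ≤ 1 := gseq_le_one hα0 hα1 hθ N₀
  have hE0 : (1:ℝ) ≤ 1 / gseq α θ N₀ := by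
    rw [le_div_iff₀ hgN₀]; linarith
  have hE0pos : (0:ℝ) < 1 / gseq α θ N₀ := by positivity
  -- trivial bound in the initial region
  have htriv : ∀ n, 1 ≤ n → n ≤ N₀ → ∀ k,
      p α θ n k ≤ (1 / gseq α θ N₀) * hseq r k * gseq α θ n := by
    intro n hn hnN k
    have hp1 := (p_bounds hα0 hα1 hθ n hn k).2
    have hh := one_le_hseq hr0.le k
    have hg : gseq α θ N₀ ≤ gseq α θ n := gseq_anti hα0 hα1 hθ n N₀ hnN
    have hgn : 0 < gseq α θ n := gseq_pos hα1 hθ n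
    calc p α θ n k ≤ 1 := hp1
      _ = (1 / gseq α θ N₀) * 1 * gseq α θ N₀ := by field_simp
      _ ≤ (1 / gseq α θ N₀) * hseq r k * gseq α θ n := by
          apply mul_le_mul
          · exact mul_le_mul_of_nonneg_left hh hE0pos.le
          · exact hg
          · exact hgN₀.le
          · positivity
  -- the diagonal inequality for n ≥ N₀
  have hdiag : ∀ n : ℕ, N₀ ≤ n → θ + (n:ℝ)*α ≤ (n:ℝ) - α := by
    intro n hn
    have h1 : (θ+α)/(1-α) ≤ (⌈(θ+α)/(1-α)⌉₊ : ℝ) := Nat.le_ceil _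
    have h2 : ((⌈(θ+α)/(1-α)⌉₊ : ℕ) : ℝ) + 1 ≤ (n:ℝ) := by
      exact_mod_cast hn
    have h3 : (θ+α)/(1-α) ≤ (n:ℝ) := by linarith
    have h4 : θ + α ≤ (n:ℝ)*(1-α) := by
      rw [div_le_iff₀ (by linarith : (0:ℝ) < 1-α)] at h3
      linarith
    nlinarith
  intro n hn
  induction n, hn using Nat.le_induction with
  | base =>
    intro k hk1 hkn
    have hk : k = 1 := le_antisymm hkn hk1
    subst hk
    exact htriv 1 le_rfl (by omega) 1
  | succ n hn ih =>
    intro k hk1 hkn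
    rcases Nat.lt_or_ge n N₀ with hsmall | hbig
    · exact htriv (n+1) (by omega) (by omega) k
    · -- n ≥ N₀ : use the recursion
      obtain ⟨k', rfl⟩ : ∃ k', k = k' + 1 := ⟨k - 1, by omega⟩
      have hrec := p_rec hα0 hθ n k' hn
      have hden : (0:ℝ) < (n:ℝ) + θ := by positivity
      have hgn : 0 < gseq α θ n := gseq_pos hα1 hθ n
      have hx1 : (1:ℝ) ≤ (n:ℝ) := by exact_mod_cast hn
      have hna : (0:ℝ) ≤ (n:ℝ) - α := by linarith
      have hgsucc : gseq α θ (n+1) = gseq α θ n * (((n:ℝ)-α)/((n:ℝ)+θ)) :=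
        gseq_succ α θ n hn
      rcases Nat.eq_zero_or_pos k' with rfl | hk'pos
      · -- k = 1
        have hp0 : p α θ n 0 = 0 := by
          obtain ⟨m, rfl⟩ : ∃ m, n = m + 1 := ⟨n - 1, by omega⟩
          exact p_zero_right m
        rw [hrec, hp0]
        have ih1 := ih 1 le_rfl (by omega)
        rw [hgsucc]
        have hcoef : (0:ℝ) ≤ (n:ℝ) - (((0:ℕ):ℝ)+1)*α := by push_cast; linarith
        calc (p α θ n 1 * ((n:ℝ) - (((0:ℕ):ℝ)+1)*α) + 0 * (θ + ((0:ℕ):ℝ)*α)) / ((n:ℝ)+θ)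
            = p α θ n 1 * (((n:ℝ) - α)/((n:ℝ)+θ)) := by push_cast; ring
          _ ≤ ((1/gseq α θ N₀) * hseq r 1 * gseq α θ n) * (((n:ℝ) - α)/((n:ℝ)+θ)) := by
              apply mul_le_mul_of_nonneg_right ih1 (by positivity)
          _ = (1/gseq α θ N₀) * hseq r 1 * (gseq α θ n * (((n:ℝ)-α)/((n:ℝ)+θ))) := by ring
      · rcases Nat.lt_or_ge n (k'+1) with hd | hd
        · -- diagonal: k'+1 = n+1, i.e. k' = n
          have hk'n : k' = n := by omega
          subst hk'n
          have hz : p α θ k' (k'+1) = 0 := p_eq_zero_of_lt (by omega)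
          rw [hrec, hz, zero_mul, zero_add]
          have ihn := ih k' hk'pos le_rfl
          have hdg := hdiag k' hbig
          have hhsucc : hseq r (k'+1) = hseq r k' * (1 + r/(k':ℝ)) := hseq_succ r k' hk'pos
          have hhmono : hseq r k' ≤ hseq r (k'+1) := by
            rw [hhsucc]
            have hh1 : (1:ℝ) ≤ hseq r k' := one_le_hseq hr0.le k'
            have hfac1 : (1:ℝ) ≤ 1 + r/(k':ℝ) := by
              have : 0 ≤ r/(k':ℝ) := by positivity
              linarith
            nlinarith
          have hp0 : 0 ≤ p α θ k' k' := (p_bounds hα0 hα1 hθ k' hn k').1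
          have hgs1 : 0 ≤ gseq α θ (k'+1) := (gseq_pos hα1 hθ (k'+1)).le
          calc p α θ k' k' * (θ + (k':ℝ)*α) / ((k':ℝ)+θ)
              ≤ p α θ k' k' * ((k':ℝ) - α) / ((k':ℝ)+θ) := by
                apply (div_le_div_iff_of_pos_right hden).mpr
                exact mul_le_mul_of_nonneg_left hdg hp0
            _ = p α θ k' k' * (((k':ℝ) - α)/((k':ℝ)+θ)) := by ring
            _ ≤ ((1/gseq α θ N₀) * hseq r k' * gseq α θ k') * (((k':ℝ) - α)/((k':ℝ)+θ)) := by
                apply mul_le_mul_of_nonneg_right ihn (by positivity)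
            _ = (1/gseq α θ N₀) * hseq r k' * gseq α θ (k'+1) := by
                rw [hgsucc]; ring
            _ ≤ (1/gseq α θ N₀) * hseq r (k'+1) * gseq α θ (k'+1) := by
                apply mul_le_mul_of_nonneg_right _ hgs1
                exact mul_le_mul_of_nonneg_left hhmono hE0pos.le
        · -- interior: 1 ≤ k', k'+1 ≤ n
          have ih1 := ih (k'+1) (by omega) hd
          have ih0 := ih k' hk'pos (by omega)
          have hcoef1 : (0:ℝ) ≤ (n:ℝ) - ((k':ℝ)+1)*α := by
            have : ((k':ℝ)+1) ≤ (n:ℝ) := by exact_mod_cast hd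
            nlinarith
          have hcoef2 : (0:ℝ) ≤ θ + (k':ℝ)*α := by positivity
          have hk'r : (0:ℝ) < (k':ℝ) := by exact_mod_cast hk'pos
          have hhsucc : hseq r (k'+1) = hseq r k' * (1 + r/(k':ℝ)) := hseq_succ r k' hk'pos
          have hkey : hseq r (k'+1) * ((n:ℝ) - ((k':ℝ)+1)*α) + hseq r k' * (θ + (k':ℝ)*α)
              = hseq r (k'+1) * ((n:ℝ) - α) := by
            rw [hhsucc, hrdef]
            field_simp
            ring
          rw [hrec]
          calc (p α θ n (k'+1) * ((n:ℝ) - ((k':ℝ)+1)*α) + p α θ n k' * (θ + (k':ℝ)*α)) / ((n:ℝ)+θ)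
              ≤ (((1/gseq α θ N₀) * hseq r (k'+1) * gseq α θ n) * ((n:ℝ) - ((k':ℝ)+1)*α)
                  + ((1/gseq α θ N₀) * hseq r k' * gseq α θ n) * (θ + (k':ℝ)*α)) / ((n:ℝ)+θ) := by
                apply (div_le_div_iff_of_pos_right hden).mpr
                exact add_le_add (mul_le_mul_of_nonneg_right ih1 hcoef1)
                  (mul_le_mul_of_nonneg_right ih0 hcoef2)
            _ = (1/gseq α θ N₀) * gseq α θ n
                  * (hseq r (k'+1) * ((n:ℝ) - ((k':ℝ)+1)*α) + hseq r k' * (θ + (k':ℝ)*α))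
                  / ((n:ℝ)+θ) := by ring
            _ = (1/gseq α θ N₀) * hseq r (k'+1) * (gseq α θ n * (((n:ℝ)-α)/((n:ℝ)+θ))) := by
                rw [hkey]; ring
            _ = (1/gseq α θ N₀) * hseq r (k'+1) * gseq α θ (n+1) := by rw [hgsucc]

end BCP

/-- There is a constant `E > 0` (depending only on `α, θ`) such that for all `n ≥ 1` and all
`1 ≤ k ≤ n` with `k ≤ n^α`, the probability `((θ/α)^(k)/(θ)^(n)) 𝒞(n,k;α)` that the
Ewens–Pitman partition of `{1,…,n}` has exactly `k` blocks is at most `E k^(θ/α)/n^(α+θ)`. -/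
theorem block_count_prob_upper_bound (α θ : ℝ) (hα0 : 0 < α) (hα1 : α < 1) (hθ : 0 < θ) :
    ∃ E : ℝ, 0 < E ∧
      ∀ n : ℕ, 1 ≤ n → ∀ k : ℕ, 1 ≤ k → k ≤ n → (k : ℝ) ≤ (n : ℝ) ^ α →
        risingFactorial (θ / α) k / risingFactorial θ n * genFactCoef α n k ≤
          E * (k : ℝ) ^ (θ / α) / (n : ℝ) ^ (α + θ) := by
  have hg := BCP.gseq_pos (α := α) (θ := θ) hα1 hθ (⌈(θ+α)/(1-α)⌉₊ + 1)
  refine ⟨(1 / BCP.gseq α θ (⌈(θ+α)/(1-α)⌉₊ + 1)) * Real.exp (θ/α)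
      * Real.exp (2*((α+θ)^2*Real.exp (α+θ) + (α+θ) + (α+θ)^2)), by positivity, ?_⟩
  intro n hn k hk1 hkn _
  have h1 := BCP.main_bound hα0 hα1 hθ n hn k hk1 hkn
  have h2 := BCP.hseq_le (r := θ/α) (by positivity) k hk1
  have h3 := BCP.gseq_le_K hα0 hα1 hθ n hn
  have hE0pos : (0:ℝ) < 1 / BCP.gseq α θ (⌈(θ+α)/(1-α)⌉₊ + 1) := by positivity
  have hgn : (0:ℝ) ≤ BCP.gseq α θ n := (BCP.gseq_pos hα1 hθ n).le
  have hh0 : (0:ℝ) ≤ BCP.hseq (θ/α) k := le_trans zero_le_one (BCP.one_le_hseq (by positivity) k)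
  have chain : BCP.p α θ n k
      ≤ (1 / BCP.gseq α θ (⌈(θ+α)/(1-α)⌉₊ + 1)) * (Real.exp (θ/α) * (k:ℝ)^(θ/α))
          * (Real.exp (2*((α+θ)^2*Real.exp (α+θ) + (α+θ) + (α+θ)^2)) / (n:ℝ)^(α+θ)) := by
    refine le_trans h1 ?_
    apply mul_le_mul
    · exact mul_le_mul_of_nonneg_left h2 hE0pos.le
    · exact h3
    · exact hgn
    · have : (0:ℝ) ≤ (k:ℝ)^(θ/α) := Real.rpow_nonneg (Nat.cast_nonneg k) _
      positivity
  calc risingFactorial (θ / α) k / risingFactorial θ n * genFactCoef α n k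
      = BCP.p α θ n k := rfl
    _ ≤ _ := chain
    _ = (1 / BCP.gseq α θ (⌈(θ+α)/(1-α)⌉₊ + 1)) * Real.exp (θ/α)
          * Real.exp (2*((α+θ)^2*Real.exp (α+θ) + (α+θ) + (α+θ)^2))
          * (k:ℝ)^(θ/α) / (n:ℝ)^(α+θ) := by ring
end
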